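/- Let ξ < 0, μ ∈ ℝ, σ > 0 satisfy μ + (σ/ξ)(Γ(1 − ξ) − 1) > 0. Let Y be a random variable with the GEV distribution G_ξ(·; μ, σ) and set X = e^Y, so that X is a positive random variable with distribution function L_{1,ξ}(·; μ, σ). Then H(Y) < H(X), i.e. the Shannon entropy of the log-GEV law strictly exceeds that of the corresponding GEV law. -/

import Mathlib

open MeasureTheory Filter Real Set

/-- The Shannon entropy `H(f) = -∫_{{f > 0}} f x * log (f x) dx` of a density `f`
with respect to Lebesgue measure. -/
noncomputable def shannonEntropy (f : ℝ → ℝ) : ℝ :=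
  -∫ x in {x : ℝ | 0 < f x}, f x * Real.log (f x)

/-- Density of the (power) GEV family with sign `s` (`s = 1` gives the log-GEV
density `l_{1,ξ}` on positive support, `s = -1` the negative log-GEV density
`l_{2,ξ}` on negative support):
`l(x) = (1/(σ|x|)) (1 + s ξ (log|x| - μ)/σ)_+^{-1-1/ξ} exp(-(1 + s ξ (log|x| - μ)/σ)_+^{-1/ξ})`. -/
noncomputable def pgevPdf (s ξ μ σ x : ℝ) : ℝ :=
  if 0 < s * x ∧ 0 < 1 + s * ξ * ((Real.log |x| - μ) / σ) then
    (1 / (σ * |x|)) * (1 + s * ξ * ((Real.log |x| - μ) / σ)) ^ (-1 - 1 / ξ) *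
      Real.exp (-(1 + s * ξ * ((Real.log |x| - μ) / σ)) ^ (-1 / ξ))
  else 0

/-- Density of the GEV distribution `G_ξ(·; μ, σ)`:
`g(x) = (1/σ) (1 + ξ (x - μ)/σ)_+^{-1-1/ξ} exp(-(1 + ξ (x - μ)/σ)_+^{-1/ξ})`. -/
noncomputable def gevPdf (ξ μ σ x : ℝ) : ℝ :=
  if 0 < 1 + (ξ / σ) * (x - μ) then
    (1 / σ) * (1 + (ξ / σ) * (x - μ)) ^ (-1 - 1 / ξ) *
      Real.exp (-(1 + (ξ / σ) * (x - μ)) ^ (-1 / ξ))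
  else 0

namespace Stmt13Aux

variable {ξ μ σ : ℝ}

lemma cond_iff (hξ : ξ < 0) (hσ : 0 < σ) (y : ℝ) :
    0 < 1 + (ξ / σ) * (y - μ) ↔ y < μ - σ / ξ := by
  have hξσ : ξ / σ < 0 := div_neg_of_neg_of_pos hξ hσ
  have key : 1 + (ξ / σ) * (y - μ) = (ξ / σ) * (y - (μ - σ / ξ)) := by
    field_simp [hξ.ne]
    ring
  rw [key]
  constructor
  · intro h
    by_contra h'
    push_neg at h'
    nlinarith [mul_nonpos_of_nonpos_of_nonneg hξσ.le (by linarith : (0:ℝ) ≤ y - (μ - σ / ξ))]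
  · intro h
    exact mul_pos_of_neg_of_neg hξσ (by linarith)

lemma gev_apply (hξ : ξ < 0) (hσ : 0 < σ) {y : ℝ} (hy : y < μ - σ / ξ) :
    gevPdf ξ μ σ y = (1 / σ) * (1 + (ξ / σ) * (y - μ)) ^ (-1 - 1 / ξ) *
      Real.exp (-(1 + (ξ / σ) * (y - μ)) ^ (-1 / ξ)) :=
  if_pos ((cond_iff hξ hσ y).mpr hy)

lemma gev_pos (hξ : ξ < 0) (hσ : 0 < σ) {y : ℝ} (hy : y < μ - σ / ξ) :
    0 < gevPdf ξ μ σ y := by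
  have ht : 0 < 1 + (ξ / σ) * (y - μ) := (cond_iff hξ hσ y).mpr hy
  rw [gev_apply hξ hσ hy]
  exact mul_pos (mul_pos (by positivity) (Real.rpow_pos_of_pos ht _)) (Real.exp_pos _)

lemma gev_pos_set (hξ : ξ < 0) (hσ : 0 < σ) :
    {y : ℝ | 0 < gevPdf ξ μ σ y} = Iio (μ - σ / ξ) := by
  ext y
  simp only [mem_setOf_eq, mem_Iio]
  constructor
  · intro h
    by_contra h'
    push_neg at h'
    rw [gevPdf, if_neg] at h
    · exact lt_irrefl 0 h
    · intro hc
      exact absurd ((cond_iff hξ hσ y).mp hc) (not_lt.mpr h')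
  · intro hy
    exact gev_pos hξ hσ hy

lemma pgev_exp (hξ : ξ < 0) (hσ : 0 < σ) {y : ℝ} (hy : y < μ - σ / ξ) :
    pgevPdf 1 ξ μ σ (Real.exp y) = gevPdf ξ μ σ y * Real.exp (-y) := by
  have ht : 0 < 1 + (ξ / σ) * (y - μ) := (cond_iff hξ hσ y).mpr hy
  have h1 : 1 + 1 * ξ * ((Real.log |Real.exp y| - μ) / σ) = 1 + (ξ / σ) * (y - μ) := by
    rw [Real.abs_exp, Real.log_exp]
    ring
  rw [pgevPdf, if_pos ⟨by simpa using Real.exp_pos y, by rw [h1]; exact ht⟩,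
    gev_apply hξ hσ hy, h1, Real.abs_exp, Real.exp_neg y]
  ring

lemma pgev_pos_set (hξ : ξ < 0) (hσ : 0 < σ) :
    {x : ℝ | 0 < pgevPdf 1 ξ μ σ x} = Ioo 0 (Real.exp (μ - σ / ξ)) := by
  ext x
  simp only [mem_setOf_eq, mem_Ioo]
  constructor
  · intro h
    rw [pgevPdf] at h
    by_cases hc : 0 < 1 * x ∧ 0 < 1 + 1 * ξ * ((Real.log |x| - μ) / σ)
    · obtain ⟨hx, hcx⟩ := hc
      rw [one_mul] at hx
      refine ⟨hx, ?_⟩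
      have h2 : 1 + 1 * ξ * ((Real.log |x| - μ) / σ) = 1 + (ξ / σ) * (Real.log x - μ) := by
        rw [abs_of_pos hx]; ring
      rw [h2] at hcx
      have := (cond_iff hξ hσ (Real.log x)).mp hcx
      exact (Real.log_lt_iff_lt_exp hx).mp this
    · rw [if_neg hc] at h
      exact absurd h (lt_irrefl 0)
  · rintro ⟨hx, hxc⟩
    have hlog : Real.log x < μ - σ / ξ := (Real.log_lt_iff_lt_exp hx).mpr hxc
    have := pgev_exp hξ hσ (μ := μ) (σ := σ) hlog
    rw [Real.exp_log hx] at this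
    rw [this]
    exact mul_pos (gev_pos hξ hσ hlog) (Real.exp_pos _)

lemma exp_image (c : ℝ) : Real.exp '' Iio c = Ioo 0 (Real.exp c) := by
  ext x
  constructor
  · rintro ⟨y, hy, rfl⟩
    exact ⟨Real.exp_pos y, Real.exp_lt_exp.mpr hy⟩
  · rintro ⟨hx0, hxc⟩
    exact ⟨Real.log x, (Real.log_lt_iff_lt_exp hx0).mpr hxc, Real.exp_log hx0⟩

lemma psi_lt (hξ : ξ < 0) (hσ : 0 < σ) {u : ℝ} (hu : 0 < u) :
    μ + (σ / ξ) * (u ^ (-ξ) - 1) < μ - σ / ξ := by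
  have hσξ : σ / ξ < 0 := div_neg_of_pos_of_neg hσ hξ
  have hr : 0 < u ^ (-ξ) := Real.rpow_pos_of_pos hu _
  have hm : (σ / ξ) * u ^ (-ξ) < 0 := mul_neg_of_neg_of_pos hσξ hr
  have expand : μ + (σ / ξ) * (u ^ (-ξ) - 1) = μ - σ / ξ + (σ / ξ) * u ^ (-ξ) := by ring
  rw [expand]
  linarith

lemma psi_image (hξ : ξ < 0) (hσ : 0 < σ) :
    (fun u : ℝ => μ + (σ / ξ) * (u ^ (-ξ) - 1)) '' Ioi 0 = Iio (μ - σ / ξ) := by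
  ext y
  constructor
  · rintro ⟨u, hu, rfl⟩
    exact psi_lt hξ hσ hu
  · intro hy
    have ht : 0 < 1 + (ξ / σ) * (y - μ) := (cond_iff hξ hσ y).mpr hy
    refine ⟨(1 + (ξ / σ) * (y - μ)) ^ (-1 / ξ), Real.rpow_pos_of_pos ht _, ?_⟩
    have h1 : ((1 + (ξ / σ) * (y - μ)) ^ (-1 / ξ)) ^ (-ξ) = 1 + (ξ / σ) * (y - μ) := by
      rw [← Real.rpow_mul ht.le, show (-1 / ξ) * (-ξ) = 1 by field_simp [hξ.ne], Real.rpow_one]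
    simp only
    rw [h1]
    field_simp [hξ.ne]
    ring

lemma psi_inj (hξ : ξ < 0) (hσ : 0 < σ) :
    InjOn (fun u : ℝ => μ + (σ / ξ) * (u ^ (-ξ) - 1)) (Ioi 0) := by
  intro u hu v hv h
  simp only at h
  have hσξ : σ / ξ ≠ 0 := ne_of_lt (div_neg_of_pos_of_neg hσ hξ)
  have h2 : u ^ (-ξ) = v ^ (-ξ) := by
    have := mul_left_cancel₀ hσξ
      (show (σ / ξ) * (u ^ (-ξ) - 1) = (σ / ξ) * (v ^ (-ξ) - 1) by linarith)
    linarith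
  exact Real.rpow_left_injOn (neg_ne_zero.mpr hξ.ne) (show (0:ℝ) ≤ u from le_of_lt hu) (show (0:ℝ) ≤ v from le_of_lt hv) h2

lemma psi_deriv (hξ : ξ < 0) (hσ : 0 < σ) :
    ∀ u ∈ Ioi (0:ℝ), HasDerivWithinAt (fun u : ℝ => μ + (σ / ξ) * (u ^ (-ξ) - 1))
      ((σ / ξ) * (-ξ * u ^ (-ξ - 1))) (Ioi 0) u := by
  intro u hu
  have h1 : HasDerivAt (fun u : ℝ => u ^ (-ξ)) (-ξ * u ^ (-ξ - 1)) u :=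
    Real.hasDerivAt_rpow_const (Or.inl (ne_of_gt hu))
  exact (((h1.sub_const 1).const_mul (σ / ξ)).const_add μ).hasDerivWithinAt

lemma abs_psi_deriv (hξ : ξ < 0) (hσ : 0 < σ) {u : ℝ} (hu : 0 < u) :
    |(σ / ξ) * (-ξ * u ^ (-ξ - 1))| = σ * u ^ (-ξ - 1) := by
  have he : (σ / ξ) * (-ξ * u ^ (-ξ - 1)) = -(σ * u ^ (-ξ - 1)) := by
    field_simp [hξ.ne]
  rw [he, abs_neg, abs_of_pos (mul_pos hσ (Real.rpow_pos_of_pos hu _))]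

lemma gev_psi (hξ : ξ < 0) (hσ : 0 < σ) {u : ℝ} (hu : 0 < u) :
    gevPdf ξ μ σ (μ + (σ / ξ) * (u ^ (-ξ) - 1)) =
      (1 / σ) * u ^ (ξ + 1) * Real.exp (-u) := by
  have ht : 1 + (ξ / σ) * ((μ + (σ / ξ) * (u ^ (-ξ) - 1)) - μ) = u ^ (-ξ) := by
    field_simp [hξ.ne]
    ring
  have hξ0 : ξ ≠ 0 := hξ.ne
  rw [gevPdf, if_pos (by rw [ht]; exact Real.rpow_pos_of_pos hu _), ht,
    ← Real.rpow_mul hu.le, ← Real.rpow_mul hu.le,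
    show (-ξ) * (-1 - 1 / ξ) = ξ + 1 by field_simp [hξ.ne]; ring,
    show (-ξ) * (-1 / ξ) = 1 by field_simp [hξ.ne], Real.rpow_one]

lemma weight_gev_psi (hξ : ξ < 0) (hσ : 0 < σ) {u : ℝ} (hu : 0 < u) :
    σ * u ^ (-ξ - 1) * gevPdf ξ μ σ (μ + (σ / ξ) * (u ^ (-ξ) - 1)) = Real.exp (-u) := by
  rw [gev_psi hξ hσ hu]
  have h4 : u ^ (-ξ - 1) * u ^ (ξ + 1) = 1 := by
    rw [← Real.rpow_add hu, show (-ξ - 1) + (ξ + 1) = 0 by ring, Real.rpow_zero]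
  calc σ * u ^ (-ξ - 1) * ((1 / σ) * u ^ (ξ + 1) * Real.exp (-u))
      = (u ^ (-ξ - 1) * u ^ (ξ + 1)) * Real.exp (-u) * (σ * (1 / σ)) := by ring
    _ = Real.exp (-u) := by rw [h4, mul_one_div_cancel hσ.ne']; ring

lemma log_gev_psi (hξ : ξ < 0) (hσ : 0 < σ) {u : ℝ} (hu : 0 < u) :
    Real.log (gevPdf ξ μ σ (μ + (σ / ξ) * (u ^ (-ξ) - 1))) =
      -Real.log σ + (ξ + 1) * Real.log u - u := by
  rw [gev_psi hξ hσ hu]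
  rw [Real.log_mul (by positivity) (Real.exp_ne_zero _),
    Real.log_mul (by positivity) (ne_of_gt (Real.rpow_pos_of_pos hu _)),
    Real.log_rpow hu, Real.log_exp, one_div, Real.log_inv]
  ring

end Stmt13Aux

/-- Let `ξ < 0`, `σ > 0` with `μ + (σ/ξ)(Γ(1-ξ) - 1) > 0`. If `Y`
has the GEV distribution `G_ξ(·; μ, σ)` (density `gevPdf ξ μ σ`) and `X = e^Y`,
so that `X` is a positive random variable with distribution function
`L_{1,ξ}(·; μ, σ)` (density `pgevPdf 1 ξ μ σ`), then `H(Y) < H(X)`. -/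
theorem stmt_13 {Ω : Type*} [MeasurableSpace Ω] (P : Measure Ω) [IsProbabilityMeasure P]
    (ξ μ σ : ℝ) (hξ : ξ < 0) (hσ : 0 < σ)
    (hpos : 0 < μ + (σ / ξ) * (Real.Gamma (1 - ξ) - 1))
    (Y X : Ω → ℝ) (hYm : Measurable Y) (hXY : X = fun ω => Real.exp (Y ω))
    (hYd : Measure.map Y P = MeasureTheory.Measure.withDensity volume
      (fun x => ENNReal.ofReal (gevPdf ξ μ σ x)))
    (hXd : Measure.map X P = MeasureTheory.Measure.withDensity volume
      (fun x => ENNReal.ofReal (pgevPdf 1 ξ μ σ x))) :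
    shannonEntropy (gevPdf ξ μ σ) < shannonEntropy (pgevPdf 1 ξ μ σ) := by
  clear hYd hXd hXY hYm
  -- change of variables `y = ψ u` reducing integrals over `Iio (μ - σ/ξ)` to `Ioi 0`
  have hCOV2 : ∀ F : ℝ → ℝ, (∫ y in Iio (μ - σ / ξ), F y) =
      ∫ u in Ioi (0:ℝ), (σ * u ^ (-ξ - 1)) *
        F (μ + (σ / ξ) * (u ^ (-ξ) - 1)) := by
    intro F
    rw [← Stmt13Aux.psi_image hξ hσ,
      integral_image_eq_integral_abs_deriv_smul measurableSet_Ioi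
        (Stmt13Aux.psi_deriv hξ hσ) (Stmt13Aux.psi_inj hξ hσ) F]
    refine setIntegral_congr_fun measurableSet_Ioi fun u hu => ?_
    rw [smul_eq_mul, Stmt13Aux.abs_psi_deriv hξ hσ hu]
  -- the GEV entropy
  have hHY : shannonEntropy (gevPdf ξ μ σ) =
      -∫ u in Ioi (0:ℝ), Real.exp (-u) * (-Real.log σ + (ξ + 1) * Real.log u - u) := by
    rw [shannonEntropy, Stmt13Aux.gev_pos_set hξ hσ,
      hCOV2 (fun y => gevPdf ξ μ σ y * Real.log (gevPdf ξ μ σ y))]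
    congr 1
    refine setIntegral_congr_fun measurableSet_Ioi fun u hu => ?_
    have hu' : 0 < u := hu
    calc σ * u ^ (-ξ - 1) * (gevPdf ξ μ σ (μ + σ / ξ * (u ^ (-ξ) - 1)) *
          Real.log (gevPdf ξ μ σ (μ + σ / ξ * (u ^ (-ξ) - 1))))
        = (σ * u ^ (-ξ - 1) * gevPdf ξ μ σ (μ + σ / ξ * (u ^ (-ξ) - 1))) *
          Real.log (gevPdf ξ μ σ (μ + σ / ξ * (u ^ (-ξ) - 1))) := by ring
      _ = Real.exp (-u) * (-Real.log σ + (ξ + 1) * Real.log u - u) := by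
          rw [Stmt13Aux.weight_gev_psi hξ hσ hu', Stmt13Aux.log_gev_psi hξ hσ hu']
  -- the log-GEV entropy
  have hHX : shannonEntropy (pgevPdf 1 ξ μ σ) =
      -∫ u in Ioi (0:ℝ), Real.exp (-u) *
        ((-Real.log σ + (ξ + 1) * Real.log u - u) - (μ + (σ / ξ) * (u ^ (-ξ) - 1))) := by
    rw [shannonEntropy, Stmt13Aux.pgev_pos_set hξ hσ, ← Stmt13Aux.exp_image,
      integral_image_eq_integral_abs_deriv_smul measurableSet_Iio
        (fun y _ => (Real.hasDerivAt_exp y).hasDerivWithinAt)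
        Real.exp_injective.injOn
        (fun x => pgevPdf 1 ξ μ σ x * Real.log (pgevPdf 1 ξ μ σ x))]
    have step1 : (∫ y in Iio (μ - σ / ξ), |Real.exp y| •
          (pgevPdf 1 ξ μ σ (Real.exp y) * Real.log (pgevPdf 1 ξ μ σ (Real.exp y)))) =
        ∫ y in Iio (μ - σ / ξ),
          (gevPdf ξ μ σ y * Real.log (gevPdf ξ μ σ y) - y * gevPdf ξ μ σ y) := by
      refine setIntegral_congr_fun measurableSet_Iio fun y hy => ?_
      have hy' : y < μ - σ / ξ := hy
      have hg : 0 < gevPdf ξ μ σ y := Stmt13Aux.gev_pos hξ hσ hy'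
      rw [smul_eq_mul, Real.abs_exp, Stmt13Aux.pgev_exp hξ hσ hy',
        Real.log_mul hg.ne' (Real.exp_ne_zero _), Real.log_exp]
      have he : Real.exp y * Real.exp (-y) = 1 := by
        rw [← Real.exp_add]; simp
      calc Real.exp y * (gevPdf ξ μ σ y * Real.exp (-y) *
            (Real.log (gevPdf ξ μ σ y) + -y))
          = (Real.exp y * Real.exp (-y)) * (gevPdf ξ μ σ y *
            (Real.log (gevPdf ξ μ σ y) + -y)) := by ring
        _ = gevPdf ξ μ σ y * Real.log (gevPdf ξ μ σ y) - y * gevPdf ξ μ σ y := by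
            rw [he, one_mul]; ring
    rw [step1, hCOV2 (fun y => gevPdf ξ μ σ y * Real.log (gevPdf ξ μ σ y) - y * gevPdf ξ μ σ y)]
    congr 1
    refine setIntegral_congr_fun measurableSet_Ioi fun u hu => ?_
    have hu' : 0 < u := hu
    calc σ * u ^ (-ξ - 1) * (gevPdf ξ μ σ (μ + σ / ξ * (u ^ (-ξ) - 1)) *
          Real.log (gevPdf ξ μ σ (μ + σ / ξ * (u ^ (-ξ) - 1))) -
          (μ + σ / ξ * (u ^ (-ξ) - 1)) * gevPdf ξ μ σ (μ + σ / ξ * (u ^ (-ξ) - 1)))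
        = (σ * u ^ (-ξ - 1) * gevPdf ξ μ σ (μ + σ / ξ * (u ^ (-ξ) - 1))) *
            Real.log (gevPdf ξ μ σ (μ + σ / ξ * (u ^ (-ξ) - 1))) -
          (μ + σ / ξ * (u ^ (-ξ) - 1)) *
            (σ * u ^ (-ξ - 1) * gevPdf ξ μ σ (μ + σ / ξ * (u ^ (-ξ) - 1))) := by ring
      _ = Real.exp (-u) * ((-Real.log σ + (ξ + 1) * Real.log u - u) -
            (μ + σ / ξ * (u ^ (-ξ) - 1))) := by
          rw [Stmt13Aux.weight_gev_psi hξ hσ hu', Stmt13Aux.log_gev_psi hξ hσ hu']; ring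
  -- integrability facts
  have hIexp : IntegrableOn (fun u : ℝ => Real.exp (-u)) (Ioi (0:ℝ)) := by
    simpa using Real.GammaIntegral_convergent one_pos
  have hIx : IntegrableOn (fun u : ℝ => Real.exp (-u) * u) (Ioi (0:ℝ)) := by
    have h := Real.GammaIntegral_convergent (show (0:ℝ) < 2 by norm_num)
    rw [show ((2:ℝ) - 1) = 1 by norm_num] at h
    simpa [Real.rpow_one] using h
  have hIgam : IntegrableOn (fun u : ℝ => Real.exp (-u) * u ^ (-ξ)) (Ioi (0:ℝ)) := by
    have h := Real.GammaIntegral_convergent (show (0:ℝ) < 1 - ξ by linarith)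
    rw [show ((1:ℝ) - ξ - 1) = -ξ by ring] at h
    exact h
  have hIhalf : IntegrableOn (fun u : ℝ => Real.exp (-u) * u ^ (-(1/2):ℝ)) (Ioi (0:ℝ)) := by
    have h := Real.GammaIntegral_convergent (show (0:ℝ) < 1/2 by norm_num)
    rw [show ((1:ℝ)/2 - 1) = -(1/2) by norm_num] at h
    exact h
  have hIlog : IntegrableOn (fun u : ℝ => Real.exp (-u) * Real.log u) (Ioi (0:ℝ)) := by
    refine Integrable.mono' ((hIhalf.const_mul 2).add hIx) ?_ ?_
    · exact ((Real.measurable_exp.comp measurable_neg).mul Real.measurable_log).aestronglyMeasurable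
    · rw [ae_restrict_iff' measurableSet_Ioi]
      refine ae_of_all _ fun u hu => ?_
      have hu' : 0 < u := hu
      have h3 : 0 < u ^ (-(1/2):ℝ) := Real.rpow_pos_of_pos hu' _
      have h1 : Real.log u ≤ u - 1 := Real.log_le_sub_one_of_pos hu'
      have h2 : Real.log (u ^ (-(1/2):ℝ)) ≤ u ^ (-(1/2):ℝ) - 1 :=
        Real.log_le_sub_one_of_pos h3
      rw [Real.log_rpow hu'] at h2
      have hb : |Real.log u| ≤ 2 * u ^ (-(1/2):ℝ) + u := by
        rw [abs_le]; constructor <;> nlinarith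
      calc ‖Real.exp (-u) * Real.log u‖ = Real.exp (-u) * |Real.log u| := by
            rw [norm_mul, Real.norm_eq_abs, Real.norm_eq_abs, Real.abs_exp]
        _ ≤ Real.exp (-u) * (2 * u ^ (-(1/2):ℝ) + u) :=
            mul_le_mul_of_nonneg_left hb (Real.exp_pos _).le
        _ = 2 * (Real.exp (-u) * u ^ (-(1/2):ℝ)) + Real.exp (-u) * u := by ring
  have hIψ : IntegrableOn
      (fun u : ℝ => Real.exp (-u) * (μ + (σ / ξ) * (u ^ (-ξ) - 1))) (Ioi (0:ℝ)) := by
    refine ((hIexp.const_mul (μ - σ / ξ)).add (hIgam.const_mul (σ / ξ))).congr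
      (ae_of_all _ fun u => ?_)
    simp only [Pi.add_apply]
    ring
  have hIA : IntegrableOn
      (fun u : ℝ => Real.exp (-u) * (-Real.log σ + (ξ + 1) * Real.log u - u)) (Ioi (0:ℝ)) := by
    refine (((hIexp.const_mul (-Real.log σ)).add (hIlog.const_mul (ξ + 1))).sub hIx).congr
      (ae_of_all _ fun u => ?_)
    simp only [Pi.add_apply, Pi.sub_apply]
    ring
  -- values
  have hv1 : (∫ u in Ioi (0:ℝ), Real.exp (-u)) = 1 := integral_exp_neg_Ioi_zero
  have hv2 : (∫ u in Ioi (0:ℝ), Real.exp (-u) * u ^ (-ξ)) = Real.Gamma (1 - ξ) := by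
    rw [Real.Gamma_eq_integral (show (0:ℝ) < 1 - ξ by linarith)]
    refine setIntegral_congr_fun measurableSet_Ioi fun u _ => ?_
    rw [show (1:ℝ) - ξ - 1 = -ξ by ring]
  have hEψ : (∫ u in Ioi (0:ℝ), Real.exp (-u) * (μ + (σ / ξ) * (u ^ (-ξ) - 1))) =
      μ + (σ / ξ) * (Real.Gamma (1 - ξ) - 1) := by
    rw [setIntegral_congr_fun measurableSet_Ioi
      (fun u _ => (by ring : Real.exp (-u) * (μ + (σ / ξ) * (u ^ (-ξ) - 1)) =
        (μ - σ / ξ) * Real.exp (-u) + (σ / ξ) * (Real.exp (-u) * u ^ (-ξ))))]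
    rw [integral_add (hIexp.const_mul _) (hIgam.const_mul _),
      integral_const_mul, integral_const_mul, hv1, hv2]
    ring
  have hsub : (∫ u in Ioi (0:ℝ), Real.exp (-u) *
        ((-Real.log σ + (ξ + 1) * Real.log u - u) - (μ + (σ / ξ) * (u ^ (-ξ) - 1)))) =
      (∫ u in Ioi (0:ℝ), Real.exp (-u) * (-Real.log σ + (ξ + 1) * Real.log u - u)) -
      ∫ u in Ioi (0:ℝ), Real.exp (-u) * (μ + (σ / ξ) * (u ^ (-ξ) - 1)) := by
    rw [← integral_sub hIA hIψ]
    refine setIntegral_congr_fun measurableSet_Ioi fun u _ => ?_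
    ring
  rw [hHY, hHX, hsub, hEψ]
  linarith
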